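/- Let 0 < q < 1, λ > 0, 0 < p < 1, and let (a_n)_{n≥0} be a nonnegative sequence, not identically zero, with ∑_{n≥0} a_n^p < ∞. Then ∑_{n=0}^∞ (q^{-λn} ∑_{k=n}^∞ q^{λk} a_k)^p + (1-q^λ)^{-1} (∑_{n=0}^∞ q^{λn} a_n)^p > (1-q^λ)^{-p} ∑_{n=0}^∞ a_n^p. -/

import Mathlib

open scoped ENNReal

lemma jensen_finset_copson {p : ℝ} (hp0 : 0 < p) (hp1 : p ≤ 1) (w z : ℕ → ℝ≥0∞)
    (s : Finset ℕ) (hw : ∑ i ∈ s, w i ≤ 1) :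
    ∑ i ∈ s, w i * z i ^ p ≤ (∑ i ∈ s, w i * z i) ^ p := by
  set W := ∑ i ∈ s, w i with hW
  by_cases hW0 : W = 0
  · have hz : ∀ i ∈ s, w i = 0 := by
      intro i hi
      exact Finset.sum_eq_zero_iff.mp (hW.symm.trans hW0) i hi
    calc ∑ i ∈ s, w i * z i ^ p = 0 := Finset.sum_eq_zero fun i hi => by rw [hz i hi, zero_mul]
      _ ≤ _ := zero_le
  · have hWt : W ≠ ⊤ := fun h => by simp [h] at hw
    have hinvp : (1:ℝ) ≤ 1 / p := by rw [le_div_iff₀ hp0]; linarith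
    have hw' : ∑ i ∈ s, w i / W = 1 := by
      simp only [div_eq_mul_inv, ← Finset.sum_mul]
      rw [← hW, ENNReal.mul_inv_cancel hW0 hWt]
    have key := ENNReal.rpow_arith_mean_le_arith_mean_rpow (fun i => w i / W)
      (fun i => z i ^ p) hw' hinvp (s := s)
    simp only [← ENNReal.rpow_mul] at key
    rw [mul_one_div_cancel hp0.ne'] at key
    simp only [ENNReal.rpow_one] at key
    have key2 : ∑ i ∈ s, w i / W * z i ^ p ≤ (∑ i ∈ s, w i / W * z i) ^ p := by
      have := ENNReal.rpow_le_rpow key hp0.le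
      rwa [← ENNReal.rpow_mul, one_div_mul_cancel hp0.ne', ENNReal.rpow_one] at this
    have hfac : ∀ (u : ℕ → ℝ≥0∞), ∑ i ∈ s, w i / W * u i = W⁻¹ * ∑ i ∈ s, w i * u i := by
      intro u
      rw [Finset.mul_sum]
      refine Finset.sum_congr rfl fun i _ => ?_
      rw [div_eq_mul_inv, mul_right_comm, mul_comm]
    rw [hfac, hfac] at key2
    have hWinvp : (W⁻¹ * ∑ i ∈ s, w i * z i) ^ p = (W⁻¹) ^ p * (∑ i ∈ s, w i * z i) ^ p :=
      ENNReal.mul_rpow_of_nonneg _ _ hp0.le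
    rw [hWinvp] at key2
    have key3 : W * (W⁻¹ * ∑ i ∈ s, w i * z i ^ p) ≤ W * ((W⁻¹) ^ p * (∑ i ∈ s, w i * z i) ^ p) :=
      mul_le_mul_right key2 W
    rw [← mul_assoc, ENNReal.mul_inv_cancel hW0 hWt, one_mul] at key3
    refine key3.trans ?_
    rw [← mul_assoc]
    have : W * (W⁻¹) ^ p ≤ 1 := by
      rw [ENNReal.inv_rpow, ← ENNReal.rpow_neg, ← ENNReal.rpow_one W, ← ENNReal.rpow_mul,
        one_mul, ← ENNReal.rpow_add _ _ hW0 hWt]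
      exact ENNReal.rpow_le_one hw (by linarith)
    calc W * (W⁻¹) ^ p * (∑ i ∈ s, w i * z i) ^ p ≤ 1 * (∑ i ∈ s, w i * z i) ^ p :=
          mul_le_mul_left this _
      _ = _ := one_mul _

lemma jensen_tsum_copson {p : ℝ} (hp0 : 0 < p) (hp1 : p ≤ 1) (w z : ℕ → ℝ≥0∞)
    (hw : ∑' i, w i ≤ 1) :
    ∑' i, w i * z i ^ p ≤ (∑' i, w i * z i) ^ p := by
  rw [show ∑' i, w i * z i ^ p = ⨆ s : Finset ℕ, ∑ i ∈ s, w i * z i ^ p from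
    ENNReal.tsum_eq_iSup_sum]
  refine iSup_le fun s => ?_
  calc ∑ i ∈ s, w i * z i ^ p ≤ (∑ i ∈ s, w i * z i) ^ p :=
        jensen_finset_copson hp0 hp1 w z s ((ENNReal.sum_le_tsum s).trans hw)
    _ ≤ (∑' i, w i * z i) ^ p := ENNReal.rpow_le_rpow (ENNReal.sum_le_tsum s) hp0.le

theorem copson_N_reverse_boundary (q l p : ℝ) (hq : 0 < q) (hq1 : q < 1) (hl : 0 < l)
    (hp0 : 0 < p) (hp1 : p < 1) (a : ℕ → ℝ≥0∞)
    (ha : ∃ n, a n ≠ 0) (hfin : (∑' n : ℕ, (a n) ^ p) ≠ ⊤) :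
    ENNReal.ofReal ((1 - q ^ l) ^ (-p)) * ∑' n : ℕ, (a n) ^ p
      < (∑' n : ℕ, ((ENNReal.ofReal q) ^ (-(l * (n : ℝ))) *
            ∑' m : ℕ, (ENNReal.ofReal q) ^ (l * ((n : ℝ) + (m : ℝ))) * a (n + m)) ^ p) +
        ENNReal.ofReal ((1 - q ^ l)⁻¹) *
          (∑' n : ℕ, (ENNReal.ofReal q) ^ (l * (n : ℝ)) * a n) ^ p := by
  -- real-level scalars
  have hx0 : (0:ℝ) < q ^ l := Real.rpow_pos_of_pos hq l
  have hx1 : q ^ l < 1 := Real.rpow_lt_one hq.le hq1 hl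
  set x : ℝ := q ^ l with hxdef
  have hy0 : (0:ℝ) < 1 - x := by linarith
  set r : ℝ≥0∞ := ENNReal.ofReal q with hrdef
  have hr0 : r ≠ 0 := by simp [hrdef, ENNReal.ofReal_eq_zero, not_le, hq]
  have hrt : r ≠ ⊤ := ENNReal.ofReal_ne_top
  set Q : ℝ≥0∞ := ENNReal.ofReal x with hQdef
  have hQ0 : Q ≠ 0 := by simp [hQdef, ENNReal.ofReal_eq_zero, not_le, hx0]
  have hQt : Q ≠ ⊤ := ENNReal.ofReal_ne_top
  have hQ1 : Q < 1 := by
    rw [hQdef, ← ENNReal.ofReal_one]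
    exact ENNReal.ofReal_lt_ofReal_iff zero_lt_one |>.mpr hx1
  set Y : ℝ≥0∞ := 1 - Q with hYdef
  have hYeq : Y = ENNReal.ofReal (1 - x) := by
    rw [hYdef, hQdef, ENNReal.ofReal_sub _ hx0.le, ENNReal.ofReal_one]
  have hY0 : Y ≠ 0 := by
    rw [hYeq]; simp only [ne_eq, ENNReal.ofReal_eq_zero, not_le]; linarith
  have hYt : Y ≠ ⊤ := by rw [hYeq]; exact ENNReal.ofReal_ne_top
  have hY1 : Y ≤ 1 := by rw [hYdef]; exact tsub_le_self
  -- powers of r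
  have hpow : ∀ t : ℝ, r ^ (l * t) = Q ^ t := by
    intro t
    rw [ENNReal.rpow_mul, hrdef, ENNReal.ofReal_rpow_of_pos hq, ← hxdef, ← hQdef]
  have hpown : ∀ m : ℕ, r ^ (l * (m : ℝ)) = Q ^ m := by
    intro m; rw [hpow, ENNReal.rpow_natCast]
  -- abbreviations
  set g : ℕ → ℝ≥0∞ := fun n => a n ^ p with hgdef
  set S : ℝ≥0∞ := ∑' n, g n with hSdef
  set b : ℕ → ℝ≥0∞ := fun n => ∑' m, Q ^ m * a (n + m) with hbdef
  -- Step A : rewrite the two sums in the goal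
  have hinner : ∀ n : ℕ, (r ^ (-(l * (n : ℝ))) *
      ∑' m : ℕ, r ^ (l * ((n : ℝ) + (m : ℝ))) * a (n + m)) = b n := by
    intro n
    have h1 : ∀ m : ℕ, r ^ (l * ((n : ℝ) + (m : ℝ))) * a (n + m)
        = r ^ (l * (n : ℝ)) * (Q ^ m * a (n + m)) := by
      intro m
      rw [mul_add, ENNReal.rpow_add _ _ hr0 hrt, hpown, hpown, mul_assoc]
    rw [tsum_congr h1, ENNReal.tsum_mul_left, ← mul_assoc,
      ← ENNReal.rpow_add _ _ hr0 hrt, neg_add_cancel, ENNReal.rpow_zero, one_mul]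
  have hb0 : (∑' n : ℕ, r ^ (l * (n : ℝ)) * a n) = b 0 := by
    rw [hbdef]
    exact tsum_congr fun n => by rw [hpown, zero_add]
  rw [tsum_congr (fun n => by rw [hinner n]), hb0]
  -- coefficient rewrites
  have hcoef1 : ENNReal.ofReal ((1 - x) ^ (-p)) = Y ^ (-p) := by
    rw [hYeq, ENNReal.ofReal_rpow_of_pos hy0]
  have hcoef2 : ENNReal.ofReal ((1 - x)⁻¹) = Y⁻¹ := by
    rw [hYeq, ENNReal.ofReal_inv_of_pos hy0]
  rw [hcoef1, hcoef2]
  -- E and its properties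
  set E : ℝ≥0∞ := ∑' k, Q ^ k * g k with hEdef
  have hES : E ≤ S := by
    rw [hEdef, hSdef]
    refine ENNReal.tsum_le_tsum fun k => ?_
    calc Q ^ k * g k ≤ 1 * g k :=
          mul_le_mul_left (pow_le_one₀ zero_le hQ1.le) _
      _ = g k := one_mul _
  have hEt : E ≠ ⊤ := fun h => hfin (top_le_iff.mp (h ▸ hES))
  have hE0 : E ≠ 0 := by
    obtain ⟨n, hn⟩ := ha
    have hgn : g n ≠ 0 := by
      rw [hgdef]
      simp only [ne_eq, ENNReal.rpow_eq_zero_iff, not_or, not_and]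
      exact ⟨fun h => absurd h hn, fun _ => by linarith⟩
    have : Q ^ n * g n ≤ E := ENNReal.le_tsum n
    intro h
    rw [h, le_zero_iff, mul_eq_zero] at this
    rcases this with h' | h'
    · exact pow_ne_zero n hQ0 h'
    · exact hgn h'
  have hQE : Q * E < E := by
    calc Q * E < 1 * E := ENNReal.mul_lt_mul_left hE0 hEt hQ1
      _ = E := one_mul _
  -- Jensen per n
  have hjensen : ∀ n : ℕ, Y * (∑' m, Q ^ m * g (n + m)) ≤ Y ^ p * (b n) ^ p := by
    intro n
    have hw1 : ∑' m : ℕ, Y * Q ^ m ≤ 1 := by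
      rw [ENNReal.tsum_mul_left, ENNReal.tsum_geometric, ← hYdef,
        ENNReal.mul_inv_cancel hY0 hYt]
    have := jensen_tsum_copson hp0 hp1.le (fun m => Y * Q ^ m) (fun m => a (n + m)) hw1
    simp only [mul_assoc] at this
    rw [ENNReal.tsum_mul_left, ENNReal.tsum_mul_left] at this
    rw [ENNReal.mul_rpow_of_nonneg _ _ hp0.le] at this
    exact this
  -- the double sum D and the rearrangement identity
  set D : ℝ≥0∞ := ∑' n, ∑' m, Q ^ m * g (n + m) with hDdef
  set c : ℕ → ℝ≥0∞ := fun k => ∑ j ∈ Finset.range (k + 1), Q ^ j with hcdef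
  have hDre : D = ∑' k, c k * g k := by
    have hF : ∀ n : ℕ, (∑' m, Q ^ m * g (n + m))
        = ∑' k, (if n ≤ k then Q ^ (k - n) * g k else 0) := by
      intro n
      have hi : Function.Injective (fun m : ℕ => n + m) := fun a b h => by
        simp only at h; omega
      have hs : Function.support (fun k => if n ≤ k then Q ^ (k - n) * g k else 0)
          ⊆ Set.range (fun m : ℕ => n + m) := by
        intro k hk
        by_cases h : n ≤ k
        · exact ⟨k - n, by show n + (k - n) = k; omega⟩
        · simp [h] at hk
      rw [← Function.Injective.tsum_eq hi hs]
      refine tsum_congr fun m => ?_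
      simp
    rw [hDdef, tsum_congr hF, ENNReal.tsum_comm]
    refine tsum_congr fun k => ?_
    rw [tsum_eq_sum (s := Finset.range (k + 1))
      (fun n hn => if_neg (by simp at hn; omega))]
    rw [Finset.sum_congr rfl (fun n hn => if_pos (by simp at hn; omega)), ← Finset.sum_mul]
    congr 1
    have h := Finset.sum_range_reflect (fun j => Q ^ j) (k + 1)
    simp only [Nat.add_sub_cancel] at h
    show ∑ i ∈ Finset.range (k + 1), Q ^ (k - i) = ∑ j ∈ Finset.range (k + 1), Q ^ j
    exact h
  -- per-k scalar identity : Y * c k + Q^(k+1) = 1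
  have hscalar : ∀ k : ℕ, Y * c k + Q ^ (k + 1) = 1 := by
    intro k
    have hck : c k = ENNReal.ofReal (∑ j ∈ Finset.range (k + 1), x ^ j) := by
      rw [hcdef, ENNReal.ofReal_sum_of_nonneg (fun j _ => pow_nonneg hx0.le j)]
      exact Finset.sum_congr rfl fun j _ => (ENNReal.ofReal_pow hx0.le j).symm
    rw [hck, hYeq, hQdef, ← ENNReal.ofReal_pow hx0.le, ← ENNReal.ofReal_mul hy0.le,
      ← ENNReal.ofReal_add (by positivity) (by positivity), ← ENNReal.ofReal_one]
    congr 1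
    have hgeom := geom_sum_mul x (k + 1)
    linear_combination -hgeom
  -- identity : Y * D + Q * E = S
  have hident : Y * D + Q * E = S := by
    rw [hDre, hEdef, hSdef, ENNReal.tsum_mul_left.symm, ENNReal.tsum_mul_left.symm,
      ← ENNReal.tsum_add]
    refine tsum_congr fun k => ?_
    rw [← mul_assoc, ← mul_assoc, ← pow_succ', ← add_mul, hscalar k, one_mul]
  have hYD : Y * D ≠ ⊤ := fun h => hfin (by rw [← hident, h, top_add])
  -- summed Jensen : Y * D ≤ Y^p * ∑' n, b n ^ p
  have hsum_jensen : Y * D ≤ Y ^ p * ∑' n, (b n) ^ p := by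
    rw [hDdef, ← ENNReal.tsum_mul_left, ← ENNReal.tsum_mul_left]
    exact ENNReal.tsum_le_tsum hjensen
  -- boundary Jensen : E ≤ Y^p * (Y⁻¹ * (b 0)^p)
  have hbd : E ≤ Y ^ p * (Y⁻¹ * (b 0) ^ p) := by
    have h0 := hjensen 0
    have hE00 : (∑' m, Q ^ m * g (0 + m)) = E := by
      rw [hEdef]; exact tsum_congr fun m => by rw [zero_add]
    rw [hE00] at h0
    calc E = Y⁻¹ * (Y * E) := by rw [← mul_assoc, ENNReal.inv_mul_cancel hY0 hYt, one_mul]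
      _ ≤ Y⁻¹ * (Y ^ p * (b 0) ^ p) := mul_le_mul_right h0 _
      _ = Y ^ p * (Y⁻¹ * (b 0) ^ p) := by ring
  -- Y^p facts
  have hYp : Y ^ p = ENNReal.ofReal ((1 - x) ^ p) := by
    rw [hYeq, ENNReal.ofReal_rpow_of_pos hy0]
  have hYp0 : Y ^ p ≠ 0 := by
    rw [hYp]; simp only [ne_eq, ENNReal.ofReal_eq_zero, not_le]
    positivity
  have hYpt : Y ^ p ≠ ⊤ := by rw [hYp]; exact ENNReal.ofReal_ne_top
  -- reduce goal by multiplying with Y^p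
  rw [← ENNReal.mul_lt_mul_iff_right hYp0 hYpt]
  have hL : Y ^ p * (Y ^ (-p) * S) = S := by
    rw [← mul_assoc, ← ENNReal.rpow_add _ _ hY0 hYt, add_neg_cancel,
      ENNReal.rpow_zero, one_mul]
  rw [hL, mul_add]
  calc S = Y * D + Q * E := hident.symm
    _ < Y * D + E := ENNReal.add_lt_add_left hYD hQE
    _ ≤ Y ^ p * ∑' n, (b n) ^ p + Y ^ p * (Y⁻¹ * (b 0) ^ p) := add_le_add hsum_jensen hbd
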